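/- Let n ≥ 4 and let φ : A_n → A_n be an ℝ-algebra automorphism. Then there exists ε ∈ {1, −1} such that φ(ẽ_0) = ε·ẽ_0, and consequently φ(ã) = ε·(φ(a))~ for every a ∈ A_n. -/

import Mathlib

noncomputable section

open scoped Quaternion

/-- The Cayley–Dickson algebra `A n = ℝ^(2^n)` as a type. -/
def CD : ℕ → Type
  | 0 => ℝ
  | n + 1 => CD n × CD n

namespace CD

instance instAddCommGroup : (n : ℕ) → AddCommGroup (CD n)
  | 0 => inferInstanceAs (AddCommGroup ℝ)
  | n + 1 =>
    letI := instAddCommGroup n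
    inferInstanceAs (AddCommGroup (CD n × CD n))

instance instModule : (n : ℕ) → Module ℝ (CD n)
  | 0 => inferInstanceAs (Module ℝ ℝ)
  | n + 1 =>
    letI := instModule n
    inferInstanceAs (Module ℝ (CD n × CD n))

/-- Conjugation in the Cayley–Dickson algebra. -/
def conj : {n : ℕ} → CD n → CD n
  | 0, x => x
  | _ + 1, x => (conj x.1, -x.2)

/-- Cayley–Dickson multiplication. -/
def mul : {n : ℕ} → CD n → CD n → CD n
  | 0, x, y => Mul.mul (α := ℝ) x y
  | _ + 1, x, y =>
    (mul x.1 y.1 - mul (conj y.2) x.2, mul y.2 x.1 + mul x.2 (conj y.1))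

instance instMul (n : ℕ) : Mul (CD n) := ⟨mul⟩

/-- The multiplicative unit `e₀`. -/
def one : {n : ℕ} → CD n
  | 0 => (1 : ℝ)
  | _ + 1 => (one, 0)

instance instOne (n : ℕ) : One (CD n) := ⟨one⟩

/-- The Euclidean inner product on `A n = ℝ^(2^n)`. -/
def inner : {n : ℕ} → CD n → CD n → ℝ
  | 0, x, y => (x * y : ℝ)
  | _ + 1, x, y => inner x.1 y.1 + inner x.2 y.2

/-- The Euclidean norm on `A n = ℝ^(2^n)`. -/
def norm {n : ℕ} (x : CD n) : ℝ := Real.sqrt (inner x x)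

/-- `ã = (-a₂, a₁)`. -/
def tilde {n : ℕ} (a : CD (n + 1)) : CD (n + 1) := (-a.2, a.1)

/-- `ẽ₀ = (0, e₀)`. -/
def etilde (n : ℕ) : CD (n + 1) := ((0 : CD n), (1 : CD n))

/-- An element is pure if its conjugate is its negative. -/
def IsPure {n : ℕ} (a : CD n) : Prop := conj a = -a

/-- An element of `A (n+1)` is doubly pure if both of its coordinates are pure. -/
def IsDoublyPure {n : ℕ} (a : CD (n + 1)) : Prop := IsPure a.1 ∧ IsPure a.2

/-- The associator `(a,b,c) = (ab)c - a(bc)`. -/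
def assoc {n : ℕ} (a b c : CD n) : CD n := a * b * c - a * (b * c)

/-- An element is alternative if `(a,a,x) = 0` for all `x`. -/
def IsAlternative {n : ℕ} (a : CD n) : Prop := ∀ x : CD n, assoc a a x = 0

/-- An element is strongly alternative if `(a,a,x) = 0` and `(a,x,x) = 0` for all `x`. -/
def IsStronglyAlternative {n : ℕ} (a : CD n) : Prop :=
  (∀ x : CD n, assoc a a x = 0) ∧ (∀ x : CD n, assoc a x x = 0)

/-- The pure (imaginary) part of an element. -/
def im {n : ℕ} (a : CD n) : CD n := (2⁻¹ : ℝ) • (a - conj a)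

/-- `H a`, the span of `{e₀, ã, a, ẽ₀}`. -/
def H {n : ℕ} (a : CD (n + 1)) : Submodule ℝ (CD (n + 1)) :=
  Submodule.span ℝ {(1 : CD (n + 1)), tilde a, a, etilde n}

/-- The orthogonal complement of `H a`. -/
def Hperp {n : ℕ} (a : CD (n + 1)) : Set (CD (n + 1)) :=
  {x | ∀ y ∈ H a, inner y x = 0}

end CD

set_option linter.dupNamespace false

namespace CD

variable {n : ℕ}

/-- Safe pair constructor for `CD (n+1)`. -/
def P {n : ℕ} (a b : CD n) : CD (n + 1) := (a, b)

@[simp] lemma P_fst (a b : CD n) : (P a b).1 = a := rfl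
@[simp] lemma P_snd (a b : CD n) : (P a b).2 = b := rfl
@[simp] lemma mul_fst (x y : CD (n+1)) : (x * y).1 = x.1 * y.1 - conj y.2 * x.2 := rfl
@[simp] lemma mul_snd (x y : CD (n+1)) : (x * y).2 = y.2 * x.1 + x.2 * conj y.1 := rfl
@[simp] lemma conj_fst (x : CD (n+1)) : (conj x).1 = conj x.1 := rfl
@[simp] lemma conj_snd (x : CD (n+1)) : (conj x).2 = -x.2 := rfl
@[simp] lemma one_fst : (1 : CD (n+1)).1 = 1 := rfl
@[simp] lemma one_snd : (1 : CD (n+1)).2 = 0 := rfl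
@[simp] lemma zero_fst : (0 : CD (n+1)).1 = 0 := rfl
@[simp] lemma zero_snd : (0 : CD (n+1)).2 = 0 := rfl
@[simp] lemma add_fst (x y : CD (n+1)) : (x + y).1 = x.1 + y.1 := rfl
@[simp] lemma add_snd (x y : CD (n+1)) : (x + y).2 = x.2 + y.2 := rfl
@[simp] lemma sub_fst (x y : CD (n+1)) : (x - y).1 = x.1 - y.1 := rfl
@[simp] lemma sub_snd (x y : CD (n+1)) : (x - y).2 = x.2 - y.2 := rfl
@[simp] lemma neg_fst (x : CD (n+1)) : (-x).1 = -x.1 := rfl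
@[simp] lemma neg_snd (x : CD (n+1)) : (-x).2 = -x.2 := rfl
@[simp] lemma smul_fst (r : ℝ) (x : CD (n+1)) : (r • x).1 = r • x.1 := rfl
@[simp] lemma smul_snd (r : ℝ) (x : CD (n+1)) : (r • x).2 = r • x.2 := rfl
@[simp] lemma etilde_fst : (etilde n).1 = 0 := rfl
@[simp] lemma etilde_snd : (etilde n).2 = 1 := rfl
@[simp] lemma tilde_fst (x : CD (n+1)) : (tilde x).1 = -x.2 := rfl
@[simp] lemma tilde_snd (x : CD (n+1)) : (tilde x).2 = x.1 := rfl

/-- Identity viewing `CD 0` as `ℝ`. -/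
def oR (x : CD 0) : ℝ := x

lemma cd_ext {x y : CD (n+1)} (h1 : x.1 = y.1) (h2 : x.2 = y.2) : x = y := Prod.ext h1 h2

lemma conj_add' : ∀ {n} (x y : CD n), conj (x + y) = conj x + conj y := by
  intro n; induction n with
  | zero => intro x y; rfl
  | succ n ih => intro x y; exact cd_ext (by simp [ih]) (by simp [neg_add, add_comm])

lemma conj_neg' : ∀ {n} (x : CD n), conj (-x) = -conj x := by
  intro n; induction n with
  | zero => intro x; rfl
  | succ n ih => intro x; exact cd_ext (by simp [ih]) (by simp)

lemma conj_sub' (x y : CD n) : conj (x - y) = conj x - conj y := by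
  rw [sub_eq_add_neg, conj_add', conj_neg', sub_eq_add_neg]

lemma conj_smul' : ∀ {n} (r : ℝ) (x : CD n), conj (r • x) = r • conj x := by
  intro n; induction n with
  | zero => intro r x; rfl
  | succ n ih => intro r x; exact cd_ext (by simp [ih]) (by simp)

lemma conj_conj' : ∀ {n} (x : CD n), conj (conj x) = x := by
  intro n; induction n with
  | zero => intro x; rfl
  | succ n ih => intro x; exact cd_ext (by simp [ih]) (by simp)

lemma conj_zero' : ∀ {n}, conj (0 : CD n) = 0 := by
  intro n; induction n with
  | zero => rfl
  | succ n ih => exact cd_ext (by simp [ih]) (by simp)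

lemma conj_one' : ∀ {n}, conj (1 : CD n) = 1 := by
  intro n; induction n with
  | zero => rfl
  | succ n ih => exact cd_ext (by simp [ih]) (by simp)

lemma zm_mz : ∀ {n}, (∀ x : CD n, (0 : CD n) * x = 0) ∧ (∀ x : CD n, x * (0 : CD n) = 0) := by
  intro n; induction n with
  | zero =>
      constructor <;> intro x
      · show (0 : ℝ) * oR x = (0 : ℝ); exact zero_mul _
      · show oR x * (0 : ℝ) = (0 : ℝ); exact mul_zero _
  | succ n ih =>
      constructor <;> intro x <;>
        exact cd_ext (by simp [ih.1, ih.2, conj_zero']) (by simp [ih.1, ih.2, conj_zero'])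

lemma zero_mul' (x : CD n) : (0 : CD n) * x = 0 := zm_mz.1 x
lemma mul_zero' (x : CD n) : x * (0 : CD n) = 0 := zm_mz.2 x

lemma om_mo : ∀ {n}, (∀ x : CD n, (1 : CD n) * x = x) ∧ (∀ x : CD n, x * (1 : CD n) = x) := by
  intro n; induction n with
  | zero =>
      constructor <;> intro x
      · show (1 : ℝ) * oR x = oR x; exact one_mul _
      · show oR x * (1 : ℝ) = oR x; exact mul_one _
  | succ n ih =>
      constructor <;> intro x <;>
        exact cd_ext (by simp [ih.1, ih.2, conj_zero', conj_one', zero_mul', mul_zero'])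
          (by simp [ih.1, ih.2, conj_zero', conj_one', zero_mul', mul_zero'])

lemma one_mul' (x : CD n) : (1 : CD n) * x = x := om_mo.1 x
lemma mul_one' (x : CD n) : x * (1 : CD n) = x := om_mo.2 x

lemma distrib' : ∀ {n}, (∀ x y z : CD n, x * (y + z) = x * y + x * z) ∧
    (∀ x y z : CD n, (x + y) * z = x * z + y * z) := by
  intro n; induction n with
  | zero =>
      constructor <;> intro x y z
      · show oR x * (oR y + oR z) = oR x * oR y + oR x * oR z; ring
      · show (oR x + oR y) * oR z = oR x * oR z + oR y * oR z; ring
  | succ n ih =>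
      constructor <;> intro x y z <;>
        refine cd_ext (by simp [ih.1, ih.2, conj_add']; abel) (by simp [ih.1, ih.2, conj_add']; abel)

lemma mul_add' (x y z : CD n) : x * (y + z) = x * y + x * z := distrib'.1 x y z
lemma add_mul' (x y z : CD n) : (x + y) * z = x * z + y * z := distrib'.2 x y z

lemma smul_mul_smul : ∀ {n}, (∀ (r : ℝ) (x y : CD n), (r • x) * y = r • (x * y)) ∧
    (∀ (r : ℝ) (x y : CD n), x * (r • y) = r • (x * y)) := by
  intro n; induction n with
  | zero =>
      constructor <;> intro r x y
      · show (r • oR x) * oR y = r • (oR x * oR y); simp [smul_eq_mul]; ring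
      · show oR x * (r • oR y) = r • (oR x * oR y); simp [smul_eq_mul]; ring
  | succ n ih =>
      constructor <;> intro r x y <;>
        refine cd_ext (by simp [ih.1, ih.2, conj_smul', smul_sub]) (by simp [ih.1, ih.2, conj_smul', smul_add])

lemma smul_mul' (r : ℝ) (x y : CD n) : (r • x) * y = r • (x * y) := smul_mul_smul.1 r x y
lemma mul_smul' (r : ℝ) (x y : CD n) : x * (r • y) = r • (x * y) := smul_mul_smul.2 r x y

lemma neg_mul' (x y : CD n) : (-x) * y = -(x * y) := by
  rw [← neg_one_smul ℝ x, smul_mul', neg_one_smul]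

lemma mul_neg' (x y : CD n) : x * (-y) = -(x * y) := by
  rw [← neg_one_smul ℝ y, mul_smul', neg_one_smul]

lemma sub_mul' (x y z : CD n) : (x - y) * z = x * z - y * z := by
  rw [sub_eq_add_neg, add_mul', neg_mul', sub_eq_add_neg]

lemma mul_sub' (x y z : CD n) : x * (y - z) = x * y - x * z := by
  rw [sub_eq_add_neg, mul_add', mul_neg', sub_eq_add_neg]

lemma conj_mul' : ∀ {n} (x y : CD n), conj (x * y) = conj y * conj x := by
  intro n; induction n with
  | zero => intro x y; show oR x * oR y = oR y * oR x; ring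
  | succ n ih =>
      intro x y
      refine cd_ext ?_ ?_
      · simp only [conj_fst, conj_snd, mul_fst, conj_sub', ih, conj_conj', conj_neg', neg_mul',
          mul_neg', neg_neg]
      · simp only [conj_fst, conj_snd, mul_snd, conj_add', conj_neg', neg_mul', mul_neg',
          conj_conj', neg_add]
        abel

/-- `x * conj x = conj x * x = r • 1` for some real `r`. -/
lemma mul_conj_exists : ∀ {n} (x : CD n), ∃ r : ℝ, x * conj x = r • 1 ∧ conj x * x = r • 1 := by
  intro n; induction n with
  | zero =>
      intro x
      refine ⟨oR x * oR x, ?_, ?_⟩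
      · show oR x * oR x = (oR x * oR x) • (1:ℝ); simp
      · show oR x * oR x = (oR x * oR x) • (1:ℝ); simp
  | succ n ih =>
      intro x
      obtain ⟨r, hr1, hr2⟩ := ih x.1
      obtain ⟨s, hs1, hs2⟩ := ih x.2
      refine ⟨r + s, cd_ext ?_ ?_, cd_ext ?_ ?_⟩
      · simp only [mul_fst, conj_fst, conj_snd, conj_neg', neg_mul', sub_neg_eq_add, hr1, hs2,
          one_fst, smul_fst, add_fst, add_smul]
      · simp only [mul_snd, conj_fst, conj_snd, conj_conj', neg_mul', one_snd, smul_snd,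
          add_snd, smul_zero, neg_add_cancel, add_zero]
      · simp only [mul_fst, conj_fst, conj_snd, conj_conj', conj_neg', neg_mul', mul_neg',
          sub_neg_eq_add, hr2, hs2, one_fst, smul_fst, add_fst, add_smul]
      · simp only [mul_snd, conj_fst, conj_snd, conj_conj', conj_neg', neg_mul', mul_neg',
          one_snd, smul_snd, add_snd, smul_zero, add_zero]
        abel

lemma mul_conj_comm (x : CD n) : x * conj x = conj x * x := by
  obtain ⟨r, h1, h2⟩ := mul_conj_exists x; rw [h1, h2]

lemma trace_exists : ∀ {n} (x : CD n), ∃ t : ℝ, x + conj x = t • 1 := by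
  intro n; induction n with
  | zero => intro x; exact ⟨oR x + oR x, by show oR x + oR x = (oR x + oR x) • (1:ℝ); simp⟩
  | succ n ih =>
      intro x
      obtain ⟨t, ht⟩ := ih x.1
      exact ⟨t, cd_ext (by simpa using ht) (by simp)⟩

lemma smul_one_inj : ∀ {n} {s t : ℝ}, s • (1 : CD n) = t • 1 → s = t := by
  intro n; induction n with
  | zero =>
      intro s t h
      have h2 : s • (1 : ℝ) = t • (1 : ℝ) := h
      simpa using h2
  | succ n ih =>
      intro s t h
      exact ih (congrArg Prod.fst h)

lemma mul_etilde (x : CD (n+1)) : x * etilde n = tilde x := by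
  refine cd_ext ?_ ?_
  · simp only [mul_fst, etilde_fst, etilde_snd, tilde_fst, mul_zero', conj_one', one_mul',
      zero_sub]
  · simp only [mul_snd, etilde_fst, etilde_snd, tilde_snd, one_mul', conj_zero', mul_zero',
      add_zero]

lemma etilde_mul_fst (x : CD (n+1)) : (etilde n * x).1 = -conj x.2 := by
  simp only [mul_fst, etilde_fst, etilde_snd, zero_mul', mul_one', zero_sub]

lemma etilde_mul_snd (x : CD (n+1)) : (etilde n * x).2 = conj x.1 := by
  simp only [mul_snd, etilde_fst, etilde_snd, mul_zero', one_mul', zero_add]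

lemma conj_etilde : conj (etilde n) = -(etilde n) := by
  refine cd_ext ?_ ?_
  · simp only [conj_fst, etilde_fst, conj_zero', neg_fst, neg_zero]
  · simp only [conj_snd, etilde_snd, neg_snd]

lemma etilde_sq : etilde n * etilde n = (-1 : CD (n+1)) := by
  rw [mul_etilde]
  refine cd_ext ?_ ?_
  · simp only [tilde_fst, etilde_snd, neg_fst, one_fst]
  · simp only [tilde_snd, etilde_fst, neg_snd, one_snd, neg_zero]

lemma tilde_eq_zero {x : CD (n+1)} (h : tilde x = 0) : x = 0 := by
  have h1 := congrArg Prod.fst h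
  have h2 := congrArg Prod.snd h
  simp only [tilde_fst, tilde_snd, zero_fst, zero_snd, neg_eq_zero] at h1 h2
  exact cd_ext h2 h1

lemma neg_self_zero {a : CD n} (h : -a = a) : a = 0 := by
  have h2 : (2:ℝ) • a = 0 := by
    rw [two_smul]; nth_rewrite 1 [← h]; exact neg_add_cancel a
  calc a = (2⁻¹:ℝ) • ((2:ℝ) • a) := by rw [smul_smul]; norm_num
  _ = 0 := by rw [h2, smul_zero]

lemma etilde_assoc : ∀ {n} (z : CD (n+1)), assoc (etilde n) z z = 0 := by
  intro n z
  obtain ⟨t, ht⟩ := trace_exists z.1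
  have hconj : conj z.1 = t • 1 - z.1 := by rw [← ht]; abel
  refine cd_ext ?_ ?_
  · simp only [assoc, sub_fst, mul_fst, mul_snd, etilde_fst, etilde_snd, zero_fst,
      zero_mul', mul_zero', one_mul', mul_one', conj_zero', conj_one', zero_sub, sub_zero,
      add_zero, zero_add, conj_add', conj_mul', conj_conj', neg_mul', mul_neg', neg_neg]
    rw [hconj, mul_sub', sub_mul', mul_smul', smul_mul', mul_one', one_mul']
    abel
  · simp only [assoc, sub_snd, mul_fst, mul_snd, etilde_fst, etilde_snd, zero_snd,
      zero_mul', mul_zero', one_mul', mul_one', conj_zero', conj_one', zero_sub, sub_zero,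
      add_zero, zero_add, conj_sub', conj_mul', conj_conj', neg_mul', mul_neg', neg_neg]
    rw [mul_conj_comm]
    abel

/-- An element commuting with everything and fixed by conjugation is real. -/
lemma comm_self_conj : ∀ {n} (c : CD n), (∀ y, c * y = y * c) → conj c = c →
    ∃ r : ℝ, c = r • 1 := by
  intro n; induction n with
  | zero => intro c _ _; exact ⟨oR c, by show oR c = oR c • (1:ℝ); simp⟩
  | succ n ih =>
      intro c hcomm hconj
      have h2 : c.2 = 0 := by
        have hs := congrArg Prod.snd hconj
        simp only [conj_snd] at hs
        exact neg_self_zero hs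
      have h1c : conj c.1 = c.1 := by
        have hf := congrArg Prod.fst hconj
        simpa only [conj_fst] using hf
      have hcm : ∀ y, c.1 * y = y * c.1 := by
        intro y
        have h := congrArg Prod.fst (hcomm (P y 0))
        simpa only [mul_fst, P_fst, P_snd, conj_zero', zero_mul', mul_zero', sub_zero, h2]
          using h
      obtain ⟨r, hr⟩ := ih c.1 hcm h1c
      exact ⟨r, cd_ext (by simp only [hr, smul_fst, one_fst]) (by simp only [h2, smul_snd, one_snd, smul_zero])⟩

/-- The commutative center of `CD (n+2)` is `ℝ`. -/
lemma comm_all {n} (c : CD (n+2)) (hcomm : ∀ y, c * y = y * c) : ∃ r : ℝ, c = r • 1 := by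
  have he := hcomm (etilde (n+1))
  rw [mul_etilde] at he
  have he1 := congrArg Prod.fst he
  have he2 := congrArg Prod.snd he
  rw [tilde_fst, etilde_mul_fst, neg_inj] at he1
  rw [tilde_snd, etilde_mul_snd] at he2
  -- he1 : c.2 = conj c.2 ; he2 : c.1 = conj c.1
  have hy : ∀ y : CD (n+1), c.2 * conj y = c.2 * y := by
    intro y
    have h := congrArg Prod.snd (hcomm (P y 0))
    simpa only [mul_snd, P_fst, P_snd, zero_mul', mul_zero', conj_zero', zero_add, add_zero]
      using h
  have hc2 : c.2 = 0 := by
    have h := hy (etilde n)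
    rw [conj_etilde, mul_neg', mul_etilde] at h
    exact tilde_eq_zero (neg_self_zero h)
  have hcm : ∀ y, c.1 * y = y * c.1 := by
    intro y
    have h := congrArg Prod.fst (hcomm (P y 0))
    simpa only [mul_fst, P_fst, P_snd, conj_zero', zero_mul', mul_zero', sub_zero, hc2]
      using h
  obtain ⟨r, hr⟩ := comm_self_conj c.1 hcm he2.symm
  exact ⟨r, cd_ext (by simp only [hr, smul_fst, one_fst])
    (by simp only [hc2, smul_snd, one_snd, smul_zero])⟩

/-- The middle nucleus of `CD (n+3)` is `ℝ`. -/
lemma nucleus_mem {n} (c : CD (n+3)) (h : ∀ x y : CD (n+3), (x * c) * y = x * (c * y)) :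
    ∃ r : ℝ, c = r • 1 := by
  -- c.1 commutes with everything
  have hkey : ∀ x y : CD (n+2), y * (x * c.1) = (y * c.1) * x := by
    intro x y
    have hh := congrArg Prod.snd (h (P x 0) (P 0 y))
    simpa only [mul_fst, mul_snd, P_fst, P_snd, conj_zero', zero_mul', mul_zero', sub_zero,
      add_zero, zero_add, zero_sub] using hh
  have hcm : ∀ x, c.1 * x = x * c.1 := by
    intro x
    have h1 := hkey x 1
    rw [one_mul', one_mul'] at h1
    exact h1.symm
  obtain ⟨r, hr⟩ := comm_all c.1 hcm
  -- c.2 = 0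
  have hE : ∀ x w : CD (n+2), (c.2 * x) * w = (c.2 * w) * x := by
    intro x w
    have hh := congrArg Prod.snd (h (P x 0) (P (conj w) 0))
    simp only [mul_fst, mul_snd, P_fst, P_snd, conj_zero', zero_mul', mul_zero', sub_zero,
      add_zero, zero_add, conj_conj'] at hh
    exact hh
  have hT : ∀ x : CD (n+2), tilde (c.2 * x) = (tilde c.2) * x := by
    intro x
    have hh := hE x (etilde (n+1))
    rwa [mul_etilde, mul_etilde] at hh
  have hz : ∀ z : CD (n+1), c.2.2 * conj z = c.2.2 * z ∧ c.2.1 * z = c.2.1 * conj z := by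
    intro z
    have hh := hT (P z 0)
    have hh1 := congrArg Prod.fst hh
    have hh2 := congrArg Prod.snd hh
    simp only [tilde_fst, tilde_snd, mul_fst, mul_snd, P_fst, P_snd, conj_zero', zero_mul',
      mul_zero', sub_zero, add_zero, zero_add, neg_mul', mul_neg', neg_zero, neg_inj] at hh1 hh2
    exact ⟨hh1, hh2⟩
  have hc22 : c.2.2 = 0 := by
    have hh := (hz (etilde n)).1
    rw [conj_etilde, mul_neg', mul_etilde] at hh
    exact tilde_eq_zero (neg_self_zero hh)
  have hc21 : c.2.1 = 0 := by
    have hh := (hz (etilde n)).2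
    rw [conj_etilde, mul_neg', mul_etilde] at hh
    exact tilde_eq_zero (neg_self_zero hh.symm)
  have hc2 : c.2 = 0 := cd_ext hc21 hc22
  exact ⟨r, cd_ext (by simp only [hr, smul_fst, one_fst])
    (by simp only [hc2, smul_snd, one_snd, smul_zero])⟩

lemma polarize {m} (a : CD m) (h : ∀ z, assoc a z z = 0) (x y : CD m) :
    assoc a x y + assoc a y x = 0 := by
  have expand : assoc a (x+y) (x+y) =
      assoc a x x + assoc a y y + (assoc a x y + assoc a y x) := by
    simp only [assoc, mul_add', add_mul']
    abel
  rw [h x, h y, h (x+y)] at expand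
  simpa using expand.symm

set_option maxHeartbeats 2000000 in
/-- The components of a "right strongly alternative" element of `CD (n+4)` are real. -/
lemma strongAlt_comp {n} (a : CD (n+4)) (h : ∀ z, assoc a z z = 0) :
    ∃ β γ : ℝ, a.1 = β • 1 ∧ a.2 = γ • 1 := by
  have key : ∀ x y : CD (n+3),
      assoc a (P x 0) (P 0 y) + assoc a (P 0 y) (P x 0) = 0 := fun x y => polarize a h _ _
  -- second components: a.1 in the middle nucleus
  have K2 : ∀ x y : CD (n+3),
      (y * (a.1 * x) - (y * x) * a.1) + ((y * a.1) * conj x - (y * conj x) * a.1) = 0 := by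
    intro x y
    have hh := congrArg Prod.snd (key x y)
    simp only [add_snd, sub_snd, assoc, mul_fst, mul_snd, P_fst, P_snd, conj_zero',
      zero_mul', mul_zero', sub_zero, add_zero, zero_add, zero_sub, zero_snd] at hh
    exact hh
  have hb : ∀ x y : CD (n+3), (y * a.1) * x = y * (a.1 * x) := by
    intro x y
    obtain ⟨t, ht⟩ := trace_exists x
    have hconj : conj x = t • 1 - x := by rw [← ht]; abel
    have h2 := K2 x y
    simp only [hconj, mul_sub', sub_mul', mul_smul', smul_mul', mul_one', one_mul'] at h2
    have h3 : y * (a.1 * x) - (y * a.1) * x = 0 := by rw [← h2]; abel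
    exact (sub_eq_zero.mp h3).symm
  -- first components: a.2 in the middle nucleus
  have K1 : ∀ x y : CD (n+3),
      (-(conj y * (a.2 * conj x)) + (conj x * conj y) * a.2) +
      (-((conj y * a.2) * x) + (x * conj y) * a.2) = 0 := by
    intro x y
    have hh := congrArg Prod.fst (key x y)
    simp only [add_fst, sub_fst, assoc, mul_fst, mul_snd, P_fst, P_snd, conj_zero',
      zero_mul', mul_zero', sub_zero, add_zero, zero_add, zero_sub, zero_fst, sub_neg_eq_add,
      neg_mul', mul_neg', neg_neg, conj_mul', conj_conj'] at hh
    exact hh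
  have hc : ∀ x z : CD (n+3), (z * a.2) * x = z * (a.2 * x) := by
    intro x z
    obtain ⟨t, ht⟩ := trace_exists x
    have hconj : conj x = t • 1 - x := by rw [← ht]; abel
    have h1 := K1 x (conj z)
    simp only [conj_conj', hconj, mul_sub', sub_mul', mul_smul', smul_mul', mul_one',
      one_mul'] at h1
    have h3 : z * (a.2 * x) - (z * a.2) * x = 0 := by rw [← h1]; abel
    exact (sub_eq_zero.mp h3).symm
  obtain ⟨β, hβ⟩ := nucleus_mem a.1 (fun x y => hb y x)
  obtain ⟨γ, hγ⟩ := nucleus_mem a.2 (fun x y => hc y x)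
  exact ⟨β, γ, hβ, hγ⟩

lemma smul_etilde (r : ℝ) : r • etilde n = P 0 (r • 1) := by
  refine cd_ext ?_ ?_
  · simp only [smul_fst, etilde_fst, P_fst, smul_zero]
  · simp only [smul_snd, etilde_snd, P_snd]

end CD


set_option maxHeartbeats 2000000 in
/-- For `n ≥ 4`, every ℝ-algebra automorphism `φ` of `A n` satisfies
`φ(ẽ₀) = ±ẽ₀` and correspondingly `φ(ã) = ±(φ a)~`. -/
theorem automorphism_etilde (n : ℕ) (hn : 4 ≤ n + 1) (φ : CD (n + 1) → CD (n + 1))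
    (hbij : Function.Bijective φ)
    (hadd : ∀ x y, φ (x + y) = φ x + φ y)
    (hsmul : ∀ (r : ℝ) (x : CD (n + 1)), φ (r • x) = r • φ x)
    (hmul : ∀ x y, φ (x * y) = φ x * φ y)
    (hone : φ 1 = 1) :
    ∃ ε : ℝ, (ε = 1 ∨ ε = -1) ∧ φ (CD.etilde n) = ε • CD.etilde n ∧
      ∀ a : CD (n + 1), φ (CD.tilde a) = ε • CD.tilde (φ a) := by
  obtain ⟨m, rfl⟩ : ∃ m, n = m + 3 := ⟨n - 3, by omega⟩
  have hzero : φ 0 = 0 := by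
    have h := hadd 0 0
    rw [add_zero] at h
    exact left_eq_add.mp h
  have hsub : ∀ x y, φ (x - y) = φ x - φ y := by
    intro x y
    have h1 := hadd (x - y) y
    rw [sub_add_cancel] at h1
    exact eq_sub_of_add_eq h1.symm
  have hneg1 : φ (-1 : CD (m+4)) = -1 := by
    have h := hsub 0 1
    rw [hzero, hone, zero_sub] at h
    exact h
  set u := φ (CD.etilde (m+3)) with hu
  have hsa : ∀ z, CD.assoc u z z = 0 := by
    intro z
    obtain ⟨w, rfl⟩ := hbij.2 z
    have h3 : φ (CD.assoc (CD.etilde (m+3)) w w) = CD.assoc u (φ w) (φ w) := by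
      simp only [CD.assoc, hsub, hmul]
      rfl
    rw [CD.etilde_assoc, hzero] at h3
    exact h3.symm
  obtain ⟨β, γ, hb, hc⟩ := CD.strongAlt_comp u hsa
  have hsq : u * u = -1 := by
    rw [← hmul, CD.etilde_sq, hneg1]
  have h1 := congrArg Prod.fst hsq
  have h2 := congrArg Prod.snd hsq
  simp only [CD.mul_fst, CD.mul_snd, hb, hc, CD.conj_smul', CD.conj_one', CD.neg_fst,
    CD.neg_snd, CD.one_fst, CD.one_snd, CD.smul_mul', CD.mul_smul', CD.one_mul',
    CD.mul_one', smul_smul, neg_zero] at h1 h2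
  -- h1 : (β*β)•1 - (γ*γ)•1 = -1 ; h2 : (γ*β)•1 + (γ*β)•1 = 0
  have q1 : β * β - γ * γ = -1 := by
    refine CD.smul_one_inj (n := m+3) ?_
    rw [sub_smul, neg_one_smul]
    exact h1
  have q2 : β * γ + β * γ = 0 := by
    refine CD.smul_one_inj (n := m+3) ?_
    rw [add_smul, zero_smul]
    exact h2
  have hγβ : β * γ = 0 := by linarith
  rcases mul_eq_zero.mp hγβ with hβ0 | hγ0
  case inr => exfalso; rw [hγ0] at q1; nlinarith
  case inl =>
    have hγ2 : γ * γ = 1 := by rw [hβ0] at q1; nlinarith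
    have huγ : u = γ • CD.etilde (m+3) := by
      rw [CD.smul_etilde]
      refine CD.cd_ext ?_ ?_
      · rw [hb, hβ0, zero_smul, CD.P_fst]
      · rw [hc, CD.P_snd]
    refine ⟨γ, mul_self_eq_one_iff.mp hγ2, huγ, ?_⟩
    intro a
    rw [← CD.mul_etilde, hmul, ← hu, huγ, CD.mul_smul', CD.mul_etilde]
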